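/- arXiv:0810.3978 — 4 statements merged into one kernel-verified Lean document; each statement's English description precedes it below -/
import Mathlib

section
/- The function Σ ↦ -(n/2)·log det(Σ) - (1/2)·tr(S Σ⁻¹), defined on k×k symmetric positive definite matrices, attains its unique maximum at Σ = S/n, where S is a fixed k×k symmetric positive definite matrix and n > 0. -/
open Matrix

private lemma scalar_ineq {n x : ℝ} (hn : 0 < n) (hx : 0 < x) :
    n * Real.log x - x ≤ n * Real.log n - n := by
  have h := Real.log_le_sub_one_of_pos (div_pos hx hn)
  rw [Real.log_div hx.ne' hn.ne'] at h
  have h2 := mul_le_mul_of_nonneg_left h hn.le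
  have h3 : n * (x / n) = x := by field_simp
  nlinarith

private lemma scalar_strict {n x : ℝ} (hn : 0 < n) (hx : 0 < x) (hxn : x ≠ n) :
    n * Real.log x - x < n * Real.log n - n := by
  have h := Real.log_lt_sub_one_of_pos (div_pos hx hn)
      (by simpa [div_eq_one_iff_eq hn.ne'] using hxn)
  rw [Real.log_div hx.ne' hn.ne'] at h
  have h2 := mul_lt_mul_of_pos_left h hn
  have h3 : n * (x / n) = x := by field_simp
  nlinarith

private lemma key_lemma {k : ℕ} {n : ℝ} (hn : 0 < n)
    {A : Matrix (Fin k) (Fin k) ℝ} (hA : A.PosDef) :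
    n * Real.log A.det - A.trace ≤ k * (n * Real.log n - n) ∧
    (n * Real.log A.det - A.trace = k * (n * Real.log n - n) → A = n • 1) := by
  have hμ : ∀ i, 0 < hA.1.eigenvalues i := hA.eigenvalues_pos
  have hdet : A.det = ∏ i, hA.1.eigenvalues i := by
    simpa using hA.1.det_eq_prod_eigenvalues
  have hVV : (hA.1.eigenvectorUnitary : Matrix (Fin k) (Fin k) ℝ) *
      star (hA.1.eigenvectorUnitary : Matrix (Fin k) (Fin k) ℝ) = 1 :=
    mem_unitaryGroup_iff.mp hA.1.eigenvectorUnitary.2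
  have hVV' : star (hA.1.eigenvectorUnitary : Matrix (Fin k) (Fin k) ℝ) *
      (hA.1.eigenvectorUnitary : Matrix (Fin k) (Fin k) ℝ) = 1 :=
    mem_unitaryGroup_iff'.mp hA.1.eigenvectorUnitary.2
  have htr : A.trace = ∑ i, hA.1.eigenvalues i := by
    conv_lhs => rw [hA.1.spectral_theorem, Unitary.conjStarAlgAut_apply]
    rw [trace_mul_cycle, hVV', one_mul]
    simp [trace_diagonal]
  have hlog : Real.log A.det = ∑ i, Real.log (hA.1.eigenvalues i) := by
    rw [hdet, Real.log_prod fun i _ => (hμ i).ne']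
  have hsum : n * Real.log A.det - A.trace
      = ∑ i, (n * Real.log (hA.1.eigenvalues i) - hA.1.eigenvalues i) := by
    rw [hlog, htr, Finset.mul_sum, Finset.sum_sub_distrib]
  have hconst : (k : ℝ) * (n * Real.log n - n)
      = ∑ _i : Fin k, (n * Real.log n - n) := by
    simp [Finset.sum_const, mul_comm]
    ring
  have hle : ∀ i ∈ Finset.univ, n * Real.log (hA.1.eigenvalues i) - hA.1.eigenvalues i
      ≤ n * Real.log n - n := fun i _ => scalar_ineq hn (hμ i)
  constructor
  · rw [hsum, hconst]
    exact Finset.sum_le_sum hle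
  · intro heq
    rw [hsum, hconst] at heq
    have hall := (Finset.sum_eq_sum_iff_of_le hle).mp heq
    have heig : ∀ i, hA.1.eigenvalues i = n := by
      intro i
      by_contra hne
      exact absurd (hall i (Finset.mem_univ i)) (scalar_strict hn (hμ i) hne).ne
    have hdiag : Matrix.diagonal (RCLike.ofReal ∘ hA.1.eigenvalues)
        = (n • 1 : Matrix (Fin k) (Fin k) ℝ) := by
      rw [smul_one_eq_diagonal]
      ext i j
      rcases eq_or_ne i j with rfl | h
      · simp [heig]
      · simp [diagonal_apply_ne _ h]
    conv_lhs => rw [hA.1.spectral_theorem, Unitary.conjStarAlgAut_apply]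
    rw [hdiag, Matrix.mul_smul, Matrix.smul_mul, mul_one, hVV]

/-- The function `Sig ↦ -(n/2)·log det Sig - (1/2)·tr(S Sig⁻¹)` on `k×k` symmetric
positive definite matrices attains its unique maximum at `Sig = S/n`. -/
theorem gaussian_profile_max {k : ℕ} (n : ℝ) (hn : 0 < n)
    (S : Matrix (Fin k) (Fin k) ℝ) (hS : S.PosDef) :
    (∀ Sig : Matrix (Fin k) (Fin k) ℝ, Sig.PosDef →
        -(n / 2) * Real.log Sig.det - (1 / 2) * Matrix.trace (S * Sig⁻¹)
          ≤ -(n / 2) * Real.log ((n⁻¹ • S).det)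
              - (1 / 2) * Matrix.trace (S * (n⁻¹ • S)⁻¹)) ∧
    (∀ Sig : Matrix (Fin k) (Fin k) ℝ, Sig.PosDef →
        -(n / 2) * Real.log Sig.det - (1 / 2) * Matrix.trace (S * Sig⁻¹)
          = -(n / 2) * Real.log ((n⁻¹ • S).det)
              - (1 / 2) * Matrix.trace (S * (n⁻¹ • S)⁻¹) →
        Sig = n⁻¹ • S) := by
  -- R is the positive semidefinite square root of S
  obtain ⟨R, hRH, hRR⟩ : ∃ R : Matrix (Fin k) (Fin k) ℝ, R.IsHermitian ∧ R * R = S :=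
    open scoped MatrixOrder in
    ⟨CFC.sqrt S, (CFC.sqrt_nonneg S).isSelfAdjoint, CFC.sqrt_mul_sqrt_self S hS.posSemidef.nonneg⟩
  have hSdet : IsUnit S.det := isUnit_iff_ne_zero.mpr hS.det_pos.ne'
  have hRdet : IsUnit R.det := by
    have : R.det * R.det = S.det := by rw [← det_mul, hRR]
    exact isUnit_iff_ne_zero.mpr fun h => hS.det_pos.ne' (by rw [← this, h, zero_mul])
  have hRinv : R * R⁻¹ = 1 := mul_nonsing_inv R hRdet
  have hRinv' : R⁻¹ * R = 1 := nonsing_inv_mul R hRdet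
  have hSinv : S * S⁻¹ = 1 := mul_nonsing_inv S hSdet
  -- conjugation map
  have hAposdef : ∀ (B : Matrix (Fin k) (Fin k) ℝ), B.PosDef → (R * B * R).PosDef := by
    intro B hB
    have hRT : Rᵀ = R := by have := hRH.eq; simpa using this
    refine .of_dotProduct_mulVec_pos (by simpa [hRT] using isHermitian_conjTranspose_mul_mul R hB.1) fun x hx => ?_
    have hRx : R *ᵥ x ≠ 0 := by
      intro h
      apply hx
      have := congrArg (fun v => R⁻¹ *ᵥ v) h
      simpa [mulVec_mulVec, hRinv', one_mulVec] using this
    have := hB.dotProduct_mulVec_pos hRx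
    have e2 : star x ᵥ* R = star (R *ᵥ x) := by rw [star_mulVec, hRH.eq]
    have hrw : star x ⬝ᵥ (R * B * R) *ᵥ x = star (R *ᵥ x) ⬝ᵥ B *ᵥ (R *ᵥ x) := by
      rw [← mulVec_mulVec, ← mulVec_mulVec, dotProduct_mulVec, e2]
    rwa [hrw]
  -- algebraic identity for the objective function
  have hkey : ∀ (Sig : Matrix (Fin k) (Fin k) ℝ) (hSig : Sig.PosDef),
      -(n / 2) * Real.log Sig.det - (1 / 2) * Matrix.trace (S * Sig⁻¹)
        = -(n / 2) * Real.log S.det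
          + (1 / 2) * (n * Real.log (R * Sig⁻¹ * R).det - (R * Sig⁻¹ * R).trace) := by
    intro Sig hSig
    have hSigdet : Sig.det ≠ 0 := hSig.det_pos.ne'
    have htr : Matrix.trace (S * Sig⁻¹) = (R * Sig⁻¹ * R).trace := by
      rw [trace_mul_cycle R Sig⁻¹ R, hRR]
    have hdet : (R * Sig⁻¹ * R).det = S.det * Sig.det⁻¹ := by
      have h2 : R.det * R.det = S.det := by rw [← det_mul, hRR]
      rw [det_mul, det_mul, det_nonsing_inv]
      simp only [Ring.inverse_eq_inv']
      rw [show R.det * Sig.det⁻¹ * R.det = R.det * R.det * Sig.det⁻¹ by ring, h2]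
    have hlogdet : Real.log (R * Sig⁻¹ * R).det
        = Real.log S.det - Real.log Sig.det := by
      rw [hdet, Real.log_mul hS.det_pos.ne' (inv_ne_zero hSigdet), Real.log_inv]
      ring
    rw [htr, hlogdet]
    ring
  -- the value at the claimed maximizer
  have hSninv : (n⁻¹ • S)⁻¹ = n • S⁻¹ := by
    apply inv_eq_right_inv
    rw [smul_mul_smul_comm, inv_mul_cancel₀ hn.ne', hSinv, one_smul]
  have hAopt : R * (n⁻¹ • S)⁻¹ * R = n • (1 : Matrix (Fin k) (Fin k) ℝ) := by
    rw [hSninv, Matrix.mul_smul, Matrix.smul_mul]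
    congr 1
    rw [← hRR, Matrix.mul_inv_rev]
    simp only [mul_assoc]
    rw [hRinv', mul_one, hRinv]
  have hSopt : (n⁻¹ • S).PosDef := by
    refine .of_dotProduct_mulVec_pos ?_ fun x hx => ?_
    · have hST : Sᵀ = S := by have := hS.1.eq; simpa using this
      show (n⁻¹ • S)ᴴ = n⁻¹ • S
      simp [conjTranspose_smul, hST]
    · have hpos := hS.dotProduct_mulVec_pos hx
      have := smul_pos (inv_pos.mpr hn) hpos
      simpa [smul_mulVec, smul_eq_mul] using this
  have hgopt : n * Real.log (R * (n⁻¹ • S)⁻¹ * R).det - (R * (n⁻¹ • S)⁻¹ * R).trace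
      = k * (n * Real.log n - n) := by
    rw [hAopt]
    have hdet : (n • (1 : Matrix (Fin k) (Fin k) ℝ)).det = n ^ k := by
      simp [det_smul]
    have htr : (n • (1 : Matrix (Fin k) (Fin k) ℝ)).trace = k * n := by
      simp [trace_smul, trace_one, mul_comm]
    rw [hdet, htr, Real.log_pow]
    ring
  constructor
  · intro Sig hSig
    rw [hkey Sig hSig, hkey _ hSopt, hgopt]
    have := (key_lemma hn (hAposdef _ hSig.inv)).1
    linarith
  · intro Sig hSig heq
    rw [hkey Sig hSig, hkey _ hSopt, hgopt] at heq
    have hgeq : n * Real.log (R * Sig⁻¹ * R).det - (R * Sig⁻¹ * R).trace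
        = k * (n * Real.log n - n) := by linarith
    have hA1 : R * Sig⁻¹ * R = n • 1 := (key_lemma hn (hAposdef _ hSig.inv)).2 hgeq
    have hSiginv : Sig⁻¹ = n • S⁻¹ := by
      have h1 : R⁻¹ * (R * Sig⁻¹ * R) * R⁻¹ = Sig⁻¹ := by
        rw [← mul_assoc, mul_assoc _ _ R⁻¹, hRinv, mul_one, ← mul_assoc, hRinv', one_mul]
      rw [hA1] at h1
      rw [← h1, Matrix.mul_smul, mul_one, Matrix.smul_mul]
      congr 1
      rw [← hRR, Matrix.mul_inv_rev]
    have hSigdet : IsUnit Sig.det := isUnit_iff_ne_zero.mpr hSig.det_pos.ne'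
    have hSoptdet : IsUnit (n⁻¹ • S).det := isUnit_iff_ne_zero.mpr hSopt.det_pos.ne'
    calc Sig = Sig⁻¹⁻¹ := (nonsing_inv_nonsing_inv Sig hSigdet).symm
      _ = ((n⁻¹ • S)⁻¹)⁻¹ := by rw [hSiginv, hSninv]
      _ = n⁻¹ • S := nonsing_inv_nonsing_inv _ hSoptdet
end

section
/- Let H be Haar-distributed on the orthogonal group O(n) with n ≥ 2. Then E(tr(H²)) = 1. -/
open Matrix MeasureTheory

namespace HaarTraceSqAux

variable {n : ℕ}

lemma row_sum (H : Matrix (Fin n) (Fin n) ℝ)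
    (hH : H ∈ Matrix.orthogonalGroup (Fin n) ℝ) (i : Fin n) :
    ∑ j, H i j * H i j = 1 := by
  have h := (Matrix.mem_orthogonalGroup_iff (Fin n) ℝ).mp hH
  have h2 := congr_fun (congr_fun h i) i
  simpa [Matrix.mul_apply, Matrix.star_apply, Matrix.one_apply] using h2

lemma entry_mem (H : Matrix (Fin n) (Fin n) ℝ)
    (hH : H ∈ Matrix.orthogonalGroup (Fin n) ℝ) (i j : Fin n) :
    H i j ∈ Set.Icc (-1:ℝ) 1 := by
  have h := row_sum H hH i
  have hle : H i j * H i j ≤ 1 := by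
    rw [← h]
    exact Finset.single_le_sum (f := fun k => H i k * H i k)
      (fun k _ => mul_self_nonneg _) (Finset.mem_univ j)
  constructor <;> nlinarith

lemma isCompact_orth :
    IsCompact ((Matrix.orthogonalGroup (Fin n) ℝ : Set (Matrix (Fin n) (Fin n) ℝ))) := by
  have hbox : IsCompact ((fun f : Fin n → Fin n → ℝ => Matrix.of f) ''
      (Set.univ.pi fun _ : Fin n => Set.univ.pi fun _ : Fin n => Set.Icc (-1:ℝ) 1)) := by
    refine IsCompact.image ?_ ?_
    · exact isCompact_univ_pi fun _ => isCompact_univ_pi fun _ => isCompact_Icc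
    · exact continuous_matrix fun i j => (continuous_apply j).comp (continuous_apply i)
  refine IsCompact.of_isClosed_subset hbox ?_ ?_
  · have h1 : IsClosed {A : Matrix (Fin n) (Fin n) ℝ | star A * A = 1} :=
      isClosed_eq (continuous_star.mul continuous_id) continuous_const
    have h2 : IsClosed {A : Matrix (Fin n) (Fin n) ℝ | A * star A = 1} :=
      isClosed_eq (continuous_id.mul continuous_star) continuous_const
    have hset : (Matrix.orthogonalGroup (Fin n) ℝ : Set (Matrix (Fin n) (Fin n) ℝ)) =
        {A | star A * A = 1} ∩ {A | A * star A = 1} := Set.ext fun A => Unitary.mem_iff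
    rw [hset]
    exact h1.inter h2
  · intro A hA
    exact ⟨fun i j => A i j, fun i _ => fun j _ => entry_mem A hA i j, rfl⟩

instance : CompactSpace (Matrix.orthogonalGroup (Fin n) ℝ) :=
  isCompact_iff_compactSpace.mp isCompact_orth

lemma sign_mem (i : Fin n) :
    Matrix.diagonal (fun k => if k = i then (-1:ℝ) else 1) ∈ Matrix.orthogonalGroup (Fin n) ℝ := by
  have hd : ∀ k : Fin n, ((if k = i then (-1:ℝ) else 1) * (if k = i then (-1:ℝ) else 1)) = 1 := by
    intro k; split_ifs <;> norm_num
  rw [Matrix.mem_orthogonalGroup_iff,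
    Matrix.diagonal_transpose, Matrix.diagonal_mul_diagonal]
  ext a b
  by_cases h : a = b <;> simp [Matrix.diagonal_apply, Matrix.one_apply, h, hd]

lemma perm_mem (σ : Equiv.Perm (Fin n)) :
    σ.permMatrix ℝ ∈ Matrix.orthogonalGroup (Fin n) ℝ := by
  rw [Matrix.mem_orthogonalGroup_iff]
  have hstar : star (σ.permMatrix ℝ) = (σ⁻¹).permMatrix ℝ := by
    rw [Matrix.star_eq_conjTranspose]
    have h2 : (σ.permMatrix ℝ)ᴴ = (σ.permMatrix ℝ)ᵀ := by
      ext a b; simp [Matrix.conjTranspose_apply]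
    rw [h2, ← PEquiv.toMatrix_symm, ← Equiv.toPEquiv_symm]
    rfl
  rw [← Matrix.conjTranspose_eq_transpose_of_trivial, ← Matrix.star_eq_conjTranspose,
    hstar, show ((σ⁻¹).permMatrix ℝ) = (σ⁻¹.toPEquiv.toMatrix : Matrix _ _ ℝ) from rfl,
    ← PEquiv.toMatrix_trans, ← Equiv.toPEquiv_trans]
  rw [show σ.trans σ⁻¹ = Equiv.refl (Fin n) from Equiv.ext fun x => by simp,
    Equiv.toPEquiv_refl, PEquiv.toMatrix_refl]

end HaarTraceSqAux

/-- For `H` Haar-distributed on `O(n)`, `n ≥ 2`: `E(tr(H²)) = 1`. -/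
theorem haar_expect_trace_sq {n : ℕ} (hn : 2 ≤ n)
    [MeasurableSpace (Matrix.orthogonalGroup (Fin n) ℝ)]
    [BorelSpace (Matrix.orthogonalGroup (Fin n) ℝ)]
    (μ : Measure (Matrix.orthogonalGroup (Fin n) ℝ))
    [μ.IsHaarMeasure] [IsProbabilityMeasure μ] :
    ∫ H, Matrix.trace (((H : Matrix (Fin n) (Fin n) ℝ)) ^ 2) ∂μ = 1 := by
  haveI : NeZero n := ⟨by omega⟩
  have hint : ∀ i j k l : Fin n, Integrable
      (fun H : Matrix.orthogonalGroup (Fin n) ℝ =>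
        (H : Matrix (Fin n) (Fin n) ℝ) i j * (H : Matrix (Fin n) (Fin n) ℝ) k l) μ := by
    intro i j k l
    have hc : Continuous fun H : Matrix.orthogonalGroup (Fin n) ℝ =>
        (H : Matrix (Fin n) (Fin n) ℝ) i j * (H : Matrix (Fin n) (Fin n) ℝ) k l :=
      (continuous_subtype_val.matrix_elem i j).mul (continuous_subtype_val.matrix_elem k l)
    exact hc.integrable_of_hasCompactSupport (HasCompactSupport.of_compactSpace _)
  have step1 : ∫ H, Matrix.trace (((H : Matrix (Fin n) (Fin n) ℝ)) ^ 2) ∂μ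
      = ∑ i, ∑ j, ∫ H : Matrix.orthogonalGroup (Fin n) ℝ,
          (H : Matrix (Fin n) (Fin n) ℝ) i j * (H : Matrix (Fin n) (Fin n) ℝ) j i ∂μ := by
    have htr : ∀ H : Matrix.orthogonalGroup (Fin n) ℝ,
        Matrix.trace (((H : Matrix (Fin n) (Fin n) ℝ)) ^ 2)
          = ∑ i, ∑ j, (H : Matrix (Fin n) (Fin n) ℝ) i j * (H : Matrix (Fin n) (Fin n) ℝ) j i := by
      intro H; simp [Matrix.trace, pow_two, Matrix.mul_apply, Matrix.diag]
    simp_rw [htr]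
    rw [integral_finset_sum _ (fun i _ => integrable_finset_sum _ (fun j _ => hint i j j i))]
    exact Finset.sum_congr rfl fun i _ => integral_finset_sum _ fun j _ => hint i j j i
  have hoff : ∀ i j : Fin n, j ≠ i →
      (∫ H : Matrix.orthogonalGroup (Fin n) ℝ,
        (H : Matrix (Fin n) (Fin n) ℝ) i j * (H : Matrix (Fin n) (Fin n) ℝ) j i ∂μ) = 0 := by
    intro i j hij
    set D : Matrix.orthogonalGroup (Fin n) ℝ :=
      ⟨Matrix.diagonal (fun k => if k = i then (-1:ℝ) else 1), HaarTraceSqAux.sign_mem i⟩ with hD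
    have key := integral_mul_left_eq_self (μ := μ)
      (fun H : Matrix.orthogonalGroup (Fin n) ℝ =>
        (H : Matrix (Fin n) (Fin n) ℝ) i j * (H : Matrix (Fin n) (Fin n) ℝ) j i) D
    have hneg : ∀ H : Matrix.orthogonalGroup (Fin n) ℝ,
        ((D * H : Matrix.orthogonalGroup (Fin n) ℝ) : Matrix (Fin n) (Fin n) ℝ) i j *
          ((D * H : Matrix.orthogonalGroup (Fin n) ℝ) : Matrix (Fin n) (Fin n) ℝ) j i
        = -((H : Matrix (Fin n) (Fin n) ℝ) i j * (H : Matrix (Fin n) (Fin n) ℝ) j i) := by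
      intro H
      have hco : ((D * H : Matrix.orthogonalGroup (Fin n) ℝ) : Matrix (Fin n) (Fin n) ℝ)
          = Matrix.diagonal (fun k => if k = i then (-1:ℝ) else 1) *
            (H : Matrix (Fin n) (Fin n) ℝ) := rfl
      rw [hco, Matrix.diagonal_mul, Matrix.diagonal_mul]
      simp [hij]
    simp_rw [hneg] at key
    rw [integral_neg] at key
    linarith
  have hdiag : ∀ i : Fin n,
      (∫ H : Matrix.orthogonalGroup (Fin n) ℝ,
        (H : Matrix (Fin n) (Fin n) ℝ) i i * (H : Matrix (Fin n) (Fin n) ℝ) i i ∂μ)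
      = ∫ H : Matrix.orthogonalGroup (Fin n) ℝ,
        (H : Matrix (Fin n) (Fin n) ℝ) 0 i * (H : Matrix (Fin n) (Fin n) ℝ) 0 i ∂μ := by
    intro i
    set P : Matrix.orthogonalGroup (Fin n) ℝ :=
      ⟨(Equiv.swap (0:Fin n) i).permMatrix ℝ, HaarTraceSqAux.perm_mem _⟩ with hP
    have key := integral_mul_left_eq_self (μ := μ)
      (fun H : Matrix.orthogonalGroup (Fin n) ℝ =>
        (H : Matrix (Fin n) (Fin n) ℝ) 0 i * (H : Matrix (Fin n) (Fin n) ℝ) 0 i) P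
    have he : ∀ H : Matrix.orthogonalGroup (Fin n) ℝ,
        ((P * H : Matrix.orthogonalGroup (Fin n) ℝ) : Matrix (Fin n) (Fin n) ℝ) 0 i
          = (H : Matrix (Fin n) (Fin n) ℝ) i i := by
      intro H
      have hco : ((P * H : Matrix.orthogonalGroup (Fin n) ℝ) : Matrix (Fin n) (Fin n) ℝ)
          = (Equiv.swap (0:Fin n) i).toPEquiv.toMatrix * (H : Matrix (Fin n) (Fin n) ℝ) := rfl
      rw [hco, PEquiv.toMatrix_toPEquiv_mul]
      simp [Matrix.submatrix_apply, Equiv.swap_apply_left]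
    simp_rw [he] at key
    exact key
  rw [step1]
  have hrow : ∀ i : Fin n,
      (∑ j, ∫ H : Matrix.orthogonalGroup (Fin n) ℝ,
        (H : Matrix (Fin n) (Fin n) ℝ) i j * (H : Matrix (Fin n) (Fin n) ℝ) j i ∂μ)
      = ∫ H : Matrix.orthogonalGroup (Fin n) ℝ,
        (H : Matrix (Fin n) (Fin n) ℝ) 0 i * (H : Matrix (Fin n) (Fin n) ℝ) 0 i ∂μ := by
    intro i
    rw [Finset.sum_eq_single i (fun j _ hj => hoff i j hj) (by simp)]
    exact hdiag i
  simp_rw [hrow]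
  rw [← integral_finset_sum _ (fun i _ => hint 0 i 0 i)]
  have hone : ∀ H : Matrix.orthogonalGroup (Fin n) ℝ,
      (∑ i, (H : Matrix (Fin n) (Fin n) ℝ) 0 i * (H : Matrix (Fin n) (Fin n) ℝ) 0 i) = 1 :=
    fun H => HaarTraceSqAux.row_sum _ H.2 0
  simp_rw [hone]
  simp
end

section
/- Let H be Haar-distributed on the orthogonal group O(n) with n ≥ 2. Then E(tr(H)²) = 1. -/
open Matrix MeasureTheory

namespace HaarTraceAux

variable {n : ℕ}

/-- Multiplication on the orthogonal group is continuous (hence measurable). -/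
lemma continuous_mul_left (g : Matrix.orthogonalGroup (Fin n) ℝ) :
    Continuous (fun H : Matrix.orthogonalGroup (Fin n) ℝ => g * H) := by
  apply Continuous.subtype_mk
    (f := fun H : Matrix.orthogonalGroup (Fin n) ℝ =>
      (g : Matrix (Fin n) (Fin n) ℝ) * (H : Matrix (Fin n) (Fin n) ℝ))
  exact continuous_const.matrix_mul continuous_subtype_val

lemma continuous_mul_right (g : Matrix.orthogonalGroup (Fin n) ℝ) :
    Continuous (fun H : Matrix.orthogonalGroup (Fin n) ℝ => H * g) := by
  apply Continuous.subtype_mk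
    (f := fun H : Matrix.orthogonalGroup (Fin n) ℝ =>
      (H : Matrix (Fin n) (Fin n) ℝ) * (g : Matrix (Fin n) (Fin n) ℝ))
  exact (continuous_subtype_val).matrix_mul continuous_const

lemma measurableMul [MeasurableSpace (Matrix.orthogonalGroup (Fin n) ℝ)]
    [BorelSpace (Matrix.orthogonalGroup (Fin n) ℝ)] :
    MeasurableMul (Matrix.orthogonalGroup (Fin n) ℝ) where
  measurable_const_mul g := (continuous_mul_left g).measurable
  measurable_mul_const g := (continuous_mul_right g).measurable

/-- The sign-flip matrix as an element of the orthogonal group. -/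
def flip (a : Fin n) : Matrix.orthogonalGroup (Fin n) ℝ :=
  ⟨Matrix.diagonal (fun j => if j = a then (-1 : ℝ) else 1), by
    rw [Matrix.mem_orthogonalGroup_iff]
    rw [Matrix.diagonal_transpose]
    rw [Matrix.diagonal_mul_diagonal]
    convert Matrix.diagonal_one using 2
    funext j
    split_ifs <;> norm_num⟩

lemma flip_coe (a : Fin n) :
    (flip a : Matrix (Fin n) (Fin n) ℝ) = Matrix.diagonal (fun j => if j = a then (-1 : ℝ) else 1) :=
  rfl

/-- Permutation matrices as elements of the orthogonal group. -/
def permG (σ : Equiv.Perm (Fin n)) : Matrix.orthogonalGroup (Fin n) ℝ :=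
  ⟨σ.permMatrix ℝ, by
    rw [Matrix.mem_orthogonalGroup_iff]
    have : (σ.permMatrix ℝ)ᴴ = (σ.permMatrix ℝ)ᵀ := Matrix.conjTranspose_eq_transpose_of_trivial _
    rw [← PEquiv.toMatrix_symm, ← Equiv.toPEquiv_symm, ← PEquiv.toMatrix_trans,
      ← Equiv.toPEquiv_trans]
    simp⟩

lemma permG_mul (σ : Equiv.Perm (Fin n)) (H : Matrix.orthogonalGroup (Fin n) ℝ) (i j : Fin n) :
    ((permG σ * H : Matrix.orthogonalGroup (Fin n) ℝ) : Matrix (Fin n) (Fin n) ℝ) i j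
      = (H : Matrix (Fin n) (Fin n) ℝ) (σ i) j := by
  have : ((permG σ * H : Matrix.orthogonalGroup (Fin n) ℝ) : Matrix (Fin n) (Fin n) ℝ)
      = σ.permMatrix ℝ * (H : Matrix (Fin n) (Fin n) ℝ) := rfl
  rw [this, PEquiv.toMatrix_toPEquiv_mul]
  rfl

lemma flip_mul (a : Fin n) (H : Matrix.orthogonalGroup (Fin n) ℝ) (i j : Fin n) :
    ((flip a * H : Matrix.orthogonalGroup (Fin n) ℝ) : Matrix (Fin n) (Fin n) ℝ) i j
      = (if i = a then (-1 : ℝ) else 1) * (H : Matrix (Fin n) (Fin n) ℝ) i j := by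
  have : ((flip a * H : Matrix.orthogonalGroup (Fin n) ℝ) : Matrix (Fin n) (Fin n) ℝ)
      = Matrix.diagonal (fun j => if j = a then (-1 : ℝ) else 1)
        * (H : Matrix (Fin n) (Fin n) ℝ) := rfl
  rw [this, Matrix.diagonal_mul]

lemma entry_integrable [MeasurableSpace (Matrix.orthogonalGroup (Fin n) ℝ)]
    [BorelSpace (Matrix.orthogonalGroup (Fin n) ℝ)]
    (μ : Measure (Matrix.orthogonalGroup (Fin n) ℝ)) [IsProbabilityMeasure μ]
    (i j k l : Fin n) :
    Integrable (fun H : Matrix.orthogonalGroup (Fin n) ℝ =>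
      (H : Matrix (Fin n) (Fin n) ℝ) i j * (H : Matrix (Fin n) (Fin n) ℝ) k l) μ := by
  have hc : Continuous (fun H : Matrix.orthogonalGroup (Fin n) ℝ =>
      (H : Matrix (Fin n) (Fin n) ℝ) i j * (H : Matrix (Fin n) (Fin n) ℝ) k l) :=
    ((continuous_subtype_val.matrix_elem i j).mul (continuous_subtype_val.matrix_elem k l))
  refine Integrable.mono' (integrable_const (1 : ℝ)) hc.aestronglyMeasurable ?_
  refine Filter.Eventually.of_forall fun H => ?_
  have h1 : ‖(H : Matrix (Fin n) (Fin n) ℝ) i j‖ ≤ 1 :=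
    entry_norm_bound_of_unitary H.2 i j
  have h2 : ‖(H : Matrix (Fin n) (Fin n) ℝ) k l‖ ≤ 1 :=
    entry_norm_bound_of_unitary H.2 k l
  calc ‖(H : Matrix (Fin n) (Fin n) ℝ) i j * (H : Matrix (Fin n) (Fin n) ℝ) k l‖
      = ‖(H : Matrix (Fin n) (Fin n) ℝ) i j‖ * ‖(H : Matrix (Fin n) (Fin n) ℝ) k l‖ :=
        norm_mul _ _
    _ ≤ 1 * 1 := by
        exact mul_le_mul h1 h2 (norm_nonneg _) zero_le_one
    _ = 1 := by norm_num

end HaarTraceAux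


/-- For `H` Haar-distributed on `O(n)`, `n ≥ 2`: `E(tr(H)²) = 1`. -/
theorem haar_expect_sq_trace {n : ℕ} (hn : 2 ≤ n)
    [MeasurableSpace (Matrix.orthogonalGroup (Fin n) ℝ)]
    [BorelSpace (Matrix.orthogonalGroup (Fin n) ℝ)]
    (μ : Measure (Matrix.orthogonalGroup (Fin n) ℝ))
    [μ.IsHaarMeasure] [IsProbabilityMeasure μ] :
    ∫ H, (Matrix.trace ((H : Matrix (Fin n) (Fin n) ℝ))) ^ 2 ∂μ = 1 := by
  haveI : MeasurableMul (Matrix.orthogonalGroup (Fin n) ℝ) := HaarTraceAux.measurableMul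
  -- off-diagonal terms vanish
  have key0 : ∀ i k : Fin n, i ≠ k →
      ∫ H : Matrix.orthogonalGroup (Fin n) ℝ, (H : Matrix (Fin n) (Fin n) ℝ) i i * (H : Matrix (Fin n) (Fin n) ℝ) k k ∂μ = 0 := by
    intro i k hik
    set F : Matrix.orthogonalGroup (Fin n) ℝ → ℝ := fun H =>
      (H : Matrix (Fin n) (Fin n) ℝ) i i * (H : Matrix (Fin n) (Fin n) ℝ) k k with hF
    have hinv := integral_mul_left_eq_self (μ := μ) F (HaarTraceAux.flip i)
    have hcomp : ∀ H : Matrix.orthogonalGroup (Fin n) ℝ, F (HaarTraceAux.flip i * H) = - F H := by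
      intro H
      simp only [hF, HaarTraceAux.flip_mul]
      rw [if_neg (Ne.symm hik), if_true]
      ring
    rw [show (∫ H : Matrix.orthogonalGroup (Fin n) ℝ, F (HaarTraceAux.flip i * H) ∂μ) = ∫ H : Matrix.orthogonalGroup (Fin n) ℝ, - F H ∂μ from
      integral_congr_ae (Filter.Eventually.of_forall hcomp), integral_neg] at hinv
    linarith
  -- each diagonal second moment equals any same-column second moment
  have key1 : ∀ i k : Fin n,
      ∫ H : Matrix.orthogonalGroup (Fin n) ℝ, (H : Matrix (Fin n) (Fin n) ℝ) i i * (H : Matrix (Fin n) (Fin n) ℝ) i i ∂μ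
        = ∫ H : Matrix.orthogonalGroup (Fin n) ℝ, (H : Matrix (Fin n) (Fin n) ℝ) k i * (H : Matrix (Fin n) (Fin n) ℝ) k i ∂μ := by
    intro i k
    set F : Matrix.orthogonalGroup (Fin n) ℝ → ℝ := fun H =>
      (H : Matrix (Fin n) (Fin n) ℝ) i i * (H : Matrix (Fin n) (Fin n) ℝ) i i with hF
    have hinv := integral_mul_left_eq_self (μ := μ) F (HaarTraceAux.permG (Equiv.swap i k))
    have hcomp : ∀ H : Matrix.orthogonalGroup (Fin n) ℝ, F (HaarTraceAux.permG (Equiv.swap i k) * H)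
        = (H : Matrix (Fin n) (Fin n) ℝ) k i * (H : Matrix (Fin n) (Fin n) ℝ) k i := by
      intro H
      simp only [hF, HaarTraceAux.permG_mul, Equiv.swap_apply_left]
    rw [show (∫ H : Matrix.orthogonalGroup (Fin n) ℝ, F (HaarTraceAux.permG (Equiv.swap i k) * H) ∂μ)
        = ∫ H : Matrix.orthogonalGroup (Fin n) ℝ, (H : Matrix (Fin n) (Fin n) ℝ) k i * (H : Matrix (Fin n) (Fin n) ℝ) k i ∂μ from
      integral_congr_ae (Filter.Eventually.of_forall hcomp)] at hinv
    exact hinv.symm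
  -- column sums of squares integrate to 1
  have keycol : ∀ i : Fin n,
      ∑ k : Fin n, ∫ H : Matrix.orthogonalGroup (Fin n) ℝ,
        (H : Matrix (Fin n) (Fin n) ℝ) k i * (H : Matrix (Fin n) (Fin n) ℝ) k i ∂μ = 1 := by
    intro i
    rw [← integral_finset_sum _ (fun k _ => HaarTraceAux.entry_integrable μ k i k i)]
    have : ∀ H : Matrix.orthogonalGroup (Fin n) ℝ, ∑ k : Fin n,
        (H : Matrix (Fin n) (Fin n) ℝ) k i * (H : Matrix (Fin n) (Fin n) ℝ) k i = 1 := by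
      intro H
      have hu : star (H : Matrix (Fin n) (Fin n) ℝ) * (H : Matrix (Fin n) (Fin n) ℝ) = 1 :=
        H.2.1
      have := congrArg (fun M => M i i) hu
      simp only [Matrix.mul_apply, Matrix.one_apply_eq] at this
      rw [← this]
      apply Finset.sum_congr rfl
      intro k _
      simp [Matrix.star_apply, mul_comm]
    rw [integral_congr_ae (Filter.Eventually.of_forall fun H => this H)]
    simp
  -- hence each diagonal second moment is 1/n
  have keydiag : ∀ i : Fin n,
      ∫ H : Matrix.orthogonalGroup (Fin n) ℝ, (H : Matrix (Fin n) (Fin n) ℝ) i i * (H : Matrix (Fin n) (Fin n) ℝ) i i ∂μ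
        = 1 / n := by
    intro i
    have h := keycol i
    have h2 : ∑ k : Fin n, ∫ H : Matrix.orthogonalGroup (Fin n) ℝ,
        (H : Matrix (Fin n) (Fin n) ℝ) k i * (H : Matrix (Fin n) (Fin n) ℝ) k i ∂μ
        = (n : ℝ) * ∫ H : Matrix.orthogonalGroup (Fin n) ℝ,
          (H : Matrix (Fin n) (Fin n) ℝ) i i * (H : Matrix (Fin n) (Fin n) ℝ) i i ∂μ := by
      rw [Finset.sum_congr rfl (fun k _ => (key1 i k).symm)]
      simp [Finset.sum_const, nsmul_eq_mul]
    rw [h2] at h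
    have hn0 : (n : ℝ) ≠ 0 := by positivity
    field_simp at h ⊢
    linarith
  -- expand trace squared
  have hexp : ∀ H : Matrix.orthogonalGroup (Fin n) ℝ, (Matrix.trace ((H : Matrix (Fin n) (Fin n) ℝ))) ^ 2
      = ∑ i : Fin n, ∑ k : Fin n,
          (H : Matrix (Fin n) (Fin n) ℝ) i i * (H : Matrix (Fin n) (Fin n) ℝ) k k := by
    intro H
    rw [Matrix.trace, sq, Finset.sum_mul_sum]
    rfl
  rw [integral_congr_ae (Filter.Eventually.of_forall hexp)]
  rw [integral_finset_sum _ (fun i _ => by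
    exact integrable_finset_sum _ (fun k _ => HaarTraceAux.entry_integrable μ i i k k))]
  have : ∀ i : Fin n, ∫ H : Matrix.orthogonalGroup (Fin n) ℝ, ∑ k : Fin n,
      (H : Matrix (Fin n) (Fin n) ℝ) i i * (H : Matrix (Fin n) (Fin n) ℝ) k k ∂μ
      = 1 / n := by
    intro i
    rw [integral_finset_sum _ (fun k _ => HaarTraceAux.entry_integrable μ i i k k)]
    rw [Finset.sum_eq_single i]
    · exact keydiag i
    · intro k _ hk
      exact key0 i k (Ne.symm hk)
    · intro h
      exact absurd (Finset.mem_univ i) h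
  rw [Finset.sum_congr rfl (fun i _ => this i)]
  have hn0 : (n : ℝ) ≠ 0 := by positivity
  simp [Finset.sum_const, nsmul_eq_mul]
  field_simp
end

section
/- Let H be Haar-distributed on the orthogonal group O(n) with n ≥ 2. Then E(tr(H²)²) = 3. -/
set_option linter.unusedSectionVars false
open Matrix MeasureTheory

namespace HaarO

variable {n : ℕ}

abbrev G (n : ℕ) := Matrix.orthogonalGroup (Fin n) ℝ

lemma col_norm (H : G n) (j : Fin n) : ∑ i, (H : Matrix (Fin n) (Fin n) ℝ) i j ^ 2 = 1 := by
  have h := H.2.1  -- star H * H = 1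
  have := congrArg (fun A => A j j) h
  simp only [Matrix.mul_apply, Matrix.one_apply_eq, Matrix.star_apply, star_trivial] at this
  simpa [pow_two] using this

lemma row_norm (H : G n) (i : Fin n) : ∑ j, (H : Matrix (Fin n) (Fin n) ℝ) i j ^ 2 = 1 := by
  have h := H.2.2  -- H * star H = 1
  have := congrArg (fun A => A i i) h
  simp only [Matrix.mul_apply, Matrix.one_apply_eq, Matrix.star_apply, star_trivial] at this
  simpa [pow_two] using this

lemma entry_abs_le (H : G n) (i j : Fin n) : ((H : Matrix (Fin n) (Fin n) ℝ) i j)^2 ≤ 1 := by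
  calc ((H : Matrix (Fin n) (Fin n) ℝ) i j)^2 ≤ ∑ i', (H : Matrix (Fin n) (Fin n) ℝ) i' j ^ 2 :=
        Finset.single_le_sum (f := fun i' => (H : Matrix (Fin n) (Fin n) ℝ) i' j ^ 2)
          (fun k _ => sq_nonneg _) (Finset.mem_univ i)
    _ = 1 := col_norm H j

lemma isCompact_carrier :
    IsCompact {A : Matrix (Fin n) (Fin n) ℝ | A ∈ Matrix.orthogonalGroup (Fin n) ℝ} := by
  have hsub : {A : Matrix (Fin n) (Fin n) ℝ | A ∈ Matrix.orthogonalGroup (Fin n) ℝ} ⊆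
      Set.pi Set.univ (fun _ : Fin n => Set.pi Set.univ
        (fun _ : Fin n => Set.Icc (-1 : ℝ) 1)) := by
    intro A hA i _ j _
    have h2 : (A i j)^2 ≤ 1 := entry_abs_le ⟨A, hA⟩ i j
    constructor <;> nlinarith [sq_nonneg (A i j)]
  have hK : IsCompact (Set.pi Set.univ (fun _ : Fin n => Set.pi Set.univ
      (fun _ : Fin n => Set.Icc (-1 : ℝ) 1))) :=
    isCompact_univ_pi fun _ => isCompact_univ_pi fun _ => isCompact_Icc
  have hc1 : Continuous fun A : Matrix (Fin n) (Fin n) ℝ => star A * A :=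
    continuous_star.matrix_mul continuous_id
  have hc2 : Continuous fun A : Matrix (Fin n) (Fin n) ℝ => A * star A :=
    continuous_id.matrix_mul continuous_star
  have hset : {A : Matrix (Fin n) (Fin n) ℝ | A ∈ Matrix.orthogonalGroup (Fin n) ℝ} =
      ((fun A : Matrix (Fin n) (Fin n) ℝ => star A * A) ⁻¹' {1}) ∩
      ((fun A : Matrix (Fin n) (Fin n) ℝ => A * star A) ⁻¹' {1}) := by
    ext A
    exact ⟨fun h => ⟨h.1, h.2⟩, fun h => ⟨h.1, h.2⟩⟩
  refine hK.of_isClosed_subset ?_ hsub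
  rw [hset]
  exact (isClosed_singleton.preimage hc1).inter (isClosed_singleton.preimage hc2)

instance : CompactSpace (G n) := by
  have := isCompact_iff_compactSpace.mp (isCompact_carrier (n := n))
  exact this


instance : IsTopologicalGroup (G n) where
  continuous_mul := by
    apply Continuous.subtype_mk
    exact (continuous_subtype_val.comp continuous_fst).matrix_mul
      (continuous_subtype_val.comp continuous_snd)
  continuous_inv := by
    apply Continuous.subtype_mk
    exact (continuous_star.comp continuous_subtype_val :
      Continuous fun x : G n => star (x : Matrix (Fin n) (Fin n) ℝ))

section Measure

variable [MeasurableSpace (G n)] [BorelSpace (G n)]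

lemma measurable_mulR (g : G n) : Measurable fun x : G n => x * g :=
  (continuous_id.mul continuous_const).measurable

lemma measurable_mulL (g : G n) : Measurable fun x : G n => g * x :=
  (continuous_const.mul continuous_id).measurable

variable (μ : Measure (G n)) [μ.IsHaarMeasure] [IsProbabilityMeasure μ]

lemma map_mulR (g : G n) : μ.map (fun x => x * g) = μ := by
  set ν := μ.map (fun x => x * g) with hν
  have hmr := measurable_mulR (n := n) g
  have hprob : IsProbabilityMeasure ν := Measure.isProbabilityMeasure_map hmr.aemeasurable
  have hleft : ν.IsMulLeftInvariant := by
    constructor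
    intro h
    rw [hν, Measure.map_map (measurable_mulL h) hmr]
    have : ((fun x : G n => h * x) ∘ fun x => x * g) =
        ((fun x : G n => x * g) ∘ fun x => h * x) := by
      funext x; simp [mul_assoc]
    rw [this, ← Measure.map_map hmr (measurable_mulL h),
      MeasureTheory.map_mul_left_eq_self μ h]
  have := Measure.isMulInvariant_eq_smul_of_compactSpace ν μ
  have huniv := congrArg (fun m : Measure (G n) => m Set.univ) this
  simp only [measure_univ, Measure.smul_apply, smul_eq_mul, mul_one] at huniv
  have hone : Measure.haarScalarFactor ν μ = 1 := by
    have := huniv.symm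
    simpa [ENNReal.smul_def] using this
  rw [this, hone, one_smul]

/-- right invariance of integrals -/
lemma integral_mulR (g : G n) (f : G n → ℝ) :
    ∫ x, f (x * g) ∂μ = ∫ x, f x ∂μ := by
  let e : G n ≃ᵐ G n :=
    { toFun := fun x => x * g
      invFun := fun x => x * g⁻¹
      left_inv := fun x => by simp [mul_assoc]
      right_inv := fun x => by simp [mul_assoc]
      measurable_toFun := measurable_mulR g
      measurable_invFun := measurable_mulR g⁻¹ }
  calc ∫ x, f (x * g) ∂μ = ∫ y, f y ∂(μ.map e) := (MeasureTheory.integral_map_equiv e f).symm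
    _ = ∫ x, f x ∂μ := by
        have h2 : μ.map e = μ := by
          have : ⇑e = fun x => x * g := rfl
          rw [this, map_mulR μ g]
        rw [h2]

lemma integral_mulL (g : G n) (f : G n → ℝ) :
    ∫ x, f (g * x) ∂μ = ∫ x, f x ∂μ := by
  let e : G n ≃ᵐ G n :=
    { toFun := fun x => g * x
      invFun := fun x => g⁻¹ * x
      left_inv := fun x => by simp [← mul_assoc]
      right_inv := fun x => by simp [← mul_assoc]
      measurable_toFun := measurable_mulL g
      measurable_invFun := measurable_mulL g⁻¹ }
  calc ∫ x, f (g * x) ∂μ = ∫ y, f y ∂(μ.map e) := (MeasureTheory.integral_map_equiv e f).symm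
    _ = ∫ x, f x ∂μ := by
        have h2 : μ.map e = μ := by
          have : ⇑e = fun x => g * x := rfl
          rw [this, MeasureTheory.map_mul_left_eq_self μ g]
        rw [h2]

end Measure


section Elements

open Equiv

variable [NeZero n]

/-- entry function -/
def E (i j : Fin n) (H : G n) : ℝ := (H : Matrix (Fin n) (Fin n) ℝ) i j

lemma continuous_E (i j : Fin n) : Continuous (E (n := n) i j) :=
  continuous_subtype_val.matrix_elem i j

/-- permutation matrix -/
def Pm (σ : Equiv.Perm (Fin n)) : Matrix (Fin n) (Fin n) ℝ :=
  Matrix.of fun a b => if a = σ b then 1 else 0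

lemma Pm_mul (σ : Equiv.Perm (Fin n)) (A : Matrix (Fin n) (Fin n) ℝ) (a b : Fin n) :
    (Pm σ * A) a b = A (σ.symm a) b := by
  rw [Matrix.mul_apply]
  have : ∀ c, (Pm σ a c * A c b) = if σ.symm a = c then A c b else 0 := by
    intro c
    by_cases h : σ.symm a = c
    · simp [Pm, h, ← Equiv.symm_apply_eq]
    · have h2 : ¬ (a = σ c) := by rwa [← Equiv.symm_apply_eq]
      simp [Pm, h, h2]
  rw [Finset.sum_congr rfl fun c _ => this c]
  simp

lemma mul_Pm (A : Matrix (Fin n) (Fin n) ℝ) (σ : Equiv.Perm (Fin n)) (a b : Fin n) :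
    (A * Pm σ) a b = A a (σ b) := by
  rw [Matrix.mul_apply]
  have : ∀ c, (A a c * Pm σ c b) = if σ b = c then A a c else 0 := by
    intro c
    by_cases h : σ b = c
    · simp [Pm, h]
    · have h2 : ¬ (c = σ b) := fun h' => h h'.symm
      simp [Pm, h, h2]
  rw [Finset.sum_congr rfl fun c _ => this c]
  simp

lemma Pm_mem (σ : Equiv.Perm (Fin n)) : Pm σ ∈ Matrix.orthogonalGroup (Fin n) ℝ := by
  rw [Matrix.mem_orthogonalGroup_iff]
  ext a b
  rw [Matrix.mul_apply, Matrix.one_apply]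
  have : ∀ c, Pm σ a c * (star (Pm σ)) c b = if σ.symm a = c then (if b = σ c then (1:ℝ) else 0) else 0 := by
    intro c
    rw [Matrix.star_apply, star_trivial]
    by_cases h : σ.symm a = c
    · simp [Pm, h, ← Equiv.symm_apply_eq]
    · have h2 : ¬ (a = σ c) := by rwa [← Equiv.symm_apply_eq]
      simp [Pm, h, h2]
  rw [← Matrix.conjTranspose_eq_transpose_of_trivial, ← Matrix.star_eq_conjTranspose]
  rw [Finset.sum_congr rfl fun c _ => this c]
  rw [Finset.sum_ite_eq Finset.univ (σ.symm a)]
  simp only [Finset.mem_univ, if_true, Equiv.apply_symm_apply]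
  by_cases hab : a = b
  · simp [hab]
  · have : ¬ (b = a) := fun h => hab h.symm
    simp [hab, this]

def permG (σ : Equiv.Perm (Fin n)) : G n := ⟨Pm σ, Pm_mem σ⟩

/-- sign (diagonal) matrix -/
lemma Dm_mem (s : Fin n → ℝ) (hs : ∀ a, s a * s a = 1) :
    Matrix.diagonal s ∈ Matrix.orthogonalGroup (Fin n) ℝ := by
  rw [Matrix.mem_orthogonalGroup_iff]
  have hstar : star (Matrix.diagonal s) = Matrix.diagonal s := by
    rw [Matrix.star_eq_conjTranspose, Matrix.diagonal_conjTranspose]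
    simp [Function.comp]
  rw [Matrix.diagonal_transpose, Matrix.diagonal_mul_diagonal]
  have : (fun a => s a * s a) = fun _ => (1:ℝ) := funext hs
  rw [this, Matrix.diagonal_one]

def signG (s : Fin n → ℝ) (hs : ∀ a, s a * s a = 1) : G n := ⟨Matrix.diagonal s, Dm_mem s hs⟩

end Elements


section Rotation

variable [NeZero n]

lemma fin01 (hn : 2 ≤ n) : (0 : Fin n) ≠ 1 := by
  intro h
  have := congrArg Fin.val h
  rw [Fin.val_zero, Fin.val_one'] at this
  have : 1 % n = 0 := this.symm
  rw [Nat.mod_eq_of_lt (by omega)] at this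
  omega

lemma sum_split (hn : 2 ≤ n) (f : Fin n → ℝ) :
    ∑ c, f c = f 0 + f 1 + ∑ c ∈ (Finset.univ.erase 0).erase 1, f c := by
  have h1 : (1 : Fin n) ∈ Finset.univ.erase (0 : Fin n) := by
    simp [Finset.mem_erase, (fin01 hn).symm]
  rw [← Finset.add_sum_erase _ f (Finset.mem_univ (0 : Fin n))]
  rw [← Finset.add_sum_erase _ f h1]
  ring

lemma sum_resid (a b : Fin n) (s : Finset (Fin n)) :
    ∑ c ∈ s, (if a = c then (1:ℝ) else 0) * (if b = c then 1 else 0)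
      = if a ∈ s ∧ b = a then 1 else 0 := by
  have h : ∀ c ∈ s, (if a = c then (1:ℝ) else 0) * (if b = c then 1 else 0)
      = if a = c then (if b = c then (1:ℝ) else 0) else 0 := by
    intro c _; by_cases h : a = c <;> simp [h]
  rw [Finset.sum_congr rfl h, Finset.sum_ite_eq s a]
  by_cases h1 : a ∈ s <;> by_cases h2 : b = a <;> simp [h1, h2]

noncomputable def rc : ℝ := Real.sqrt 2 / 2

lemma rc_sq : rc * rc = 1/2 := by
  rw [rc, div_mul_div_comm, Real.mul_self_sqrt (by norm_num : (0:ℝ) ≤ 2)]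
  norm_num

noncomputable def Rm (n : ℕ) [NeZero n] : Matrix (Fin n) (Fin n) ℝ :=
  Matrix.of fun a b =>
    if b = 0 then (if a = 0 then rc else if a = 1 then -rc else 0)
    else if b = 1 then (if a = 0 then rc else if a = 1 then rc else 0)
    else if a = b then 1 else 0

lemma Rm_mem (hn : 2 ≤ n) : Rm n ∈ Matrix.orthogonalGroup (Fin n) ℝ := by
  rw [Matrix.mem_orthogonalGroup_iff]
  ext a b
  rw [Matrix.mul_apply, Matrix.one_apply]
  have hterm : ∀ c, Rm n a c * (star (Rm n)) c b = Rm n a c * Rm n b c := by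
    intro c; rw [Matrix.star_apply, star_trivial]
  rw [← Matrix.conjTranspose_eq_transpose_of_trivial, ← Matrix.star_eq_conjTranspose]
  rw [Finset.sum_congr rfl fun c _ => hterm c, sum_split hn]
  have hs : ∀ c ∈ (Finset.univ.erase (0:Fin n)).erase 1,
      Rm n a c * Rm n b c = (if a = c then (1:ℝ) else 0) * (if b = c then 1 else 0) := by
    intro c hc
    have hc1 : c ≠ 1 := (Finset.mem_erase.mp hc).1
    have hc0 : c ≠ 0 := (Finset.mem_erase.mp ((Finset.mem_erase.mp hc).2)).1
    simp [Rm, hc0, hc1]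
  rw [Finset.sum_congr rfl hs, sum_resid]
  have h01 := fin01 hn
  by_cases ha0 : a = 0 <;> by_cases ha1 : a = 1 <;>
    by_cases hb0 : b = 0 <;> by_cases hb1 : b = 1 <;>
    simp [Rm, ha0, ha1, hb0, hb1, h01, h01.symm, Finset.mem_erase, eq_comm] <;>
    nlinarith [rc_sq]

noncomputable def rotG (hn : 2 ≤ n) : G n := ⟨Rm n, Rm_mem hn⟩

lemma mul_Rm0 (hn : 2 ≤ n) (A : Matrix (Fin n) (Fin n) ℝ) (a : Fin n) :
    (A * Rm n) a 0 = rc * (A a 0 - A a 1) := by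
  rw [Matrix.mul_apply, sum_split hn]
  have hz : ∀ c ∈ (Finset.univ.erase (0:Fin n)).erase 1, A a c * Rm n c 0 = 0 := by
    intro c hc
    have hc1 : c ≠ 1 := (Finset.mem_erase.mp hc).1
    have hc0 : c ≠ 0 := (Finset.mem_erase.mp ((Finset.mem_erase.mp hc).2)).1
    simp [Rm, hc0, hc1]
  rw [Finset.sum_eq_zero hz]
  have h01 := fin01 hn
  simp [Rm, h01.symm]
  ring

end Rotation


section Moments

variable [NeZero n] [MeasurableSpace (G n)] [BorelSpace (G n)]
variable (μ : Measure (G n)) [μ.IsHaarMeasure] [IsProbabilityMeasure μ]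

lemma integrable_cont (f : G n → ℝ) (hf : Continuous f) : Integrable f μ := by
  have hsupp : HasCompactSupport f :=
    IsCompact.of_isClosed_subset isCompact_univ (isClosed_tsupport f) (Set.subset_univ _)
  exact hf.integrable_of_hasCompactSupport hsupp

lemma coe_mul3 (g H h : G n) :
    ((g * (H * h) : G n) : Matrix (Fin n) (Fin n) ℝ) =
      (g : Matrix (Fin n) (Fin n) ℝ) * ((H : Matrix (Fin n) (Fin n) ℝ) * (h : Matrix (Fin n) (Fin n) ℝ)) := rfl

lemma m4_perm (σ τ : Equiv.Perm (Fin n)) (i1 j1 i2 j2 i3 j3 i4 j4 : Fin n) :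
    ∫ H, E i1 j1 H * E i2 j2 H * E i3 j3 H * E i4 j4 H ∂μ
      = ∫ H, E (σ i1) (τ j1) H * E (σ i2) (τ j2) H * E (σ i3) (τ j3) H * E (σ i4) (τ j4) H ∂μ := by
  set f : G n → ℝ := fun H => E i1 j1 H * E i2 j2 H * E i3 j3 H * E i4 j4 H with hf
  have step1 : ∫ H, f H ∂μ = ∫ H, f (permG σ.symm * H) ∂μ :=
    (integral_mulL μ (permG σ.symm) f).symm
  have step2 : ∫ H, f (permG σ.symm * H) ∂μ
      = ∫ H, f (permG σ.symm * (H * permG τ)) ∂μ :=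
    (integral_mulR μ (permG τ) (fun H => f (permG σ.symm * H))).symm
  rw [step1, step2]
  congr 1
  funext H
  have hE : ∀ i j : Fin n, E i j (permG σ.symm * (H * permG τ)) = E (σ i) (τ j) H := by
    intro i j
    show ((permG σ.symm * (H * permG τ) : G n) : Matrix (Fin n) (Fin n) ℝ) i j = _
    rw [coe_mul3]
    show (Pm σ.symm * ((H : Matrix (Fin n) (Fin n) ℝ) * Pm τ)) i j = _
    rw [Pm_mul, Equiv.symm_symm, mul_Pm]
    rfl
  simp only [hf, hE]

lemma m2_perm (σ τ : Equiv.Perm (Fin n)) (i1 j1 i2 j2 : Fin n) :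
    ∫ H, E i1 j1 H * E i2 j2 H ∂μ
      = ∫ H, E (σ i1) (τ j1) H * E (σ i2) (τ j2) H ∂μ := by
  set f : G n → ℝ := fun H => E i1 j1 H * E i2 j2 H with hf
  have step1 : ∫ H, f H ∂μ = ∫ H, f (permG σ.symm * H) ∂μ :=
    (integral_mulL μ (permG σ.symm) f).symm
  have step2 : ∫ H, f (permG σ.symm * H) ∂μ
      = ∫ H, f (permG σ.symm * (H * permG τ)) ∂μ :=
    (integral_mulR μ (permG τ) (fun H => f (permG σ.symm * H))).symm
  rw [step1, step2]
  congr 1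
  funext H
  have hE : ∀ i j : Fin n, E i j (permG σ.symm * (H * permG τ)) = E (σ i) (τ j) H := by
    intro i j
    show ((permG σ.symm * (H * permG τ) : G n) : Matrix (Fin n) (Fin n) ℝ) i j = _
    rw [coe_mul3]
    show (Pm σ.symm * ((H : Matrix (Fin n) (Fin n) ℝ) * Pm τ)) i j = _
    rw [Pm_mul, Equiv.symm_symm, mul_Pm]
    rfl
  simp only [hf, hE]

lemma m4_signL (s : Fin n → ℝ) (hs : ∀ a, s a * s a = 1) (i1 j1 i2 j2 i3 j3 i4 j4 : Fin n) :
    ∫ H, E i1 j1 H * E i2 j2 H * E i3 j3 H * E i4 j4 H ∂μ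
      = (s i1 * s i2 * s i3 * s i4) *
        ∫ H, E i1 j1 H * E i2 j2 H * E i3 j3 H * E i4 j4 H ∂μ := by
  set f : G n → ℝ := fun H => E i1 j1 H * E i2 j2 H * E i3 j3 H * E i4 j4 H with hf
  have step1 : ∫ H, f H ∂μ = ∫ H, f (signG s hs * H) ∂μ :=
    (integral_mulL μ (signG s hs) f).symm
  nth_rewrite 1 [step1]
  have hE : ∀ (i j : Fin n) (H : G n), E i j (signG s hs * H) = s i * E i j H := by
    intro i j H
    show ((signG s hs * H : G n) : Matrix (Fin n) (Fin n) ℝ) i j = _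
    show (Matrix.diagonal s * (H : Matrix (Fin n) (Fin n) ℝ)) i j = _
    rw [Matrix.diagonal_mul]
    rfl
  have : (fun H => f (signG s hs * H))
      = fun H => (s i1 * s i2 * s i3 * s i4) * f H := by
    funext H
    simp only [hf, hE]
    ring
  rw [this, integral_const_mul]

lemma m4_signR (s : Fin n → ℝ) (hs : ∀ a, s a * s a = 1) (i1 j1 i2 j2 i3 j3 i4 j4 : Fin n) :
    ∫ H, E i1 j1 H * E i2 j2 H * E i3 j3 H * E i4 j4 H ∂μ
      = (s j1 * s j2 * s j3 * s j4) *
        ∫ H, E i1 j1 H * E i2 j2 H * E i3 j3 H * E i4 j4 H ∂μ := by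
  set f : G n → ℝ := fun H => E i1 j1 H * E i2 j2 H * E i3 j3 H * E i4 j4 H with hf
  have step1 : ∫ H, f H ∂μ = ∫ H, f (H * signG s hs) ∂μ :=
    (integral_mulR μ (signG s hs) f).symm
  nth_rewrite 1 [step1]
  have hE : ∀ (i j : Fin n) (H : G n), E i j (H * signG s hs) = E i j H * s j := by
    intro i j H
    show ((H * signG s hs : G n) : Matrix (Fin n) (Fin n) ℝ) i j = _
    show ((H : Matrix (Fin n) (Fin n) ℝ) * Matrix.diagonal s) i j = _
    rw [Matrix.mul_diagonal]
    rfl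
  have : (fun H => f (H * signG s hs))
      = fun H => (s j1 * s j2 * s j3 * s j4) * f H := by
    funext H
    simp only [hf, hE]
    ring
  rw [this, integral_const_mul]

lemma m4_zeroL (s : Fin n → ℝ) (hs : ∀ a, s a * s a = 1) (i1 j1 i2 j2 i3 j3 i4 j4 : Fin n)
    (hsign : s i1 * s i2 * s i3 * s i4 = -1) :
    ∫ H, E i1 j1 H * E i2 j2 H * E i3 j3 H * E i4 j4 H ∂μ = 0 := by
  have h := m4_signL μ s hs i1 j1 i2 j2 i3 j3 i4 j4
  rw [hsign] at h
  linarith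

lemma m4_zeroR (s : Fin n → ℝ) (hs : ∀ a, s a * s a = 1) (i1 j1 i2 j2 i3 j3 i4 j4 : Fin n)
    (hsign : s j1 * s j2 * s j3 * s j4 = -1) :
    ∫ H, E i1 j1 H * E i2 j2 H * E i3 j3 H * E i4 j4 H ∂μ = 0 := by
  have h := m4_signR μ s hs i1 j1 i2 j2 i3 j3 i4 j4
  rw [hsign] at h
  linarith

end Moments


section Sums

variable [NeZero n]

lemma sum_if_eq (x : Fin n) (u v : ℝ) :
    ∑ k : Fin n, (if k = x then u else v) = u + ((n:ℝ)-1)*v := by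
  have h : ∀ k : Fin n, (if k = x then u else v) = v + (if k = x then u - v else 0) := by
    intro k; by_cases h : k = x <;> simp [h]
  rw [Finset.sum_congr rfl fun k _ => h k, Finset.sum_add_distrib, Finset.sum_const,
    Finset.sum_ite_eq' Finset.univ x fun _ => u - v]
  simp only [Finset.card_univ, Fintype.card_fin, Finset.mem_univ, if_true, nsmul_eq_mul]
  ring

lemma sum_pair_ind (i j : Fin n) (b : ℝ) :
    ∑ k : Fin n, ∑ l : Fin n, (if k = i ∧ l = j then b else 0) = b := by
  have h1 : ∀ k : Fin n, ∑ l : Fin n, (if k = i ∧ l = j then b else 0)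
      = if k = i then b else 0 := by
    intro k
    by_cases hk : k = i
    · simp only [hk, true_and]
      rw [Finset.sum_ite_eq' Finset.univ j fun _ => b]
      simp
    · simp [hk]
  rw [Finset.sum_congr rfl fun k _ => h1 k, Finset.sum_ite_eq' Finset.univ i fun _ => b]
  simp

lemma exists_perm (hn : 2 ≤ n) {x y : Fin n} (hxy : x ≠ y) :
    ∃ σ : Equiv.Perm (Fin n), σ 0 = x ∧ σ 1 = y := by
  classical
  set s1 := Equiv.swap (0 : Fin n) x with hs1
  set y' := s1.symm y with hy'def
  have hx : s1 0 = x := Equiv.swap_apply_left 0 x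
  have hy'0 : y' ≠ 0 := by
    intro h
    apply hxy
    have : y = s1 0 := by rw [← h, hy'def, Equiv.apply_symm_apply]
    rw [hx] at this
    exact this.symm ▸ rfl
  refine ⟨(Equiv.swap (1 : Fin n) y').trans s1, ?_, ?_⟩
  · have h0 : Equiv.swap (1 : Fin n) y' 0 = 0 :=
      Equiv.swap_apply_of_ne_of_ne (fin01 hn) (Ne.symm hy'0)
    simp [Equiv.trans_apply, h0, hx]
  · have h1 : Equiv.swap (1 : Fin n) y' 1 = y' := Equiv.swap_apply_left 1 y'
    simp [Equiv.trans_apply, h1, hy'def]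

end Sums

section Relations

variable [NeZero n] [MeasurableSpace (G n)] [BorelSpace (G n)]
variable (μ : Measure (G n)) [μ.IsHaarMeasure] [IsProbabilityMeasure μ]

lemma integrable_m4 (i1 j1 i2 j2 i3 j3 i4 j4 : Fin n) :
    Integrable (fun H => E i1 j1 H * E i2 j2 H * E i3 j3 H * E i4 j4 H) μ :=
  integrable_cont μ _ ((((continuous_E i1 j1).mul (continuous_E i2 j2)).mul
    (continuous_E i3 j3)).mul (continuous_E i4 j4))

lemma integrable_m2 (i1 j1 i2 j2 : Fin n) :
    Integrable (fun H => E i1 j1 H * E i2 j2 H) μ :=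
  integrable_cont μ _ ((continuous_E i1 j1).mul (continuous_E i2 j2))

/-- second moment of an entry -/
lemma E0 (hn : 2 ≤ n) : ∫ H, E 0 0 H * E 0 0 H ∂μ = 1 / (n:ℝ) := by
  have hone : (fun H : G n => ∑ j, E 0 j H * E 0 j H) = fun _ => (1:ℝ) := by
    funext H
    simp only [E, ← pow_two]
    exact row_norm H 0
  have hsum : ∫ H, ∑ j, E 0 j H * E 0 j H ∂μ = 1 := by
    rw [hone]
    simp
  have hswap : ∫ H, ∑ j, E 0 j H * E 0 j H ∂μ = ∑ j, ∫ H, E 0 j H * E 0 j H ∂μ :=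
    integral_finset_sum _ (fun j _ => integrable_m2 μ 0 j 0 j)
  have hperm : ∀ j : Fin n, ∫ H, E 0 j H * E 0 j H ∂μ = ∫ H, E 0 0 H * E 0 0 H ∂μ := by
    intro j
    have h := m2_perm μ (Equiv.refl _) (Equiv.swap 0 j) 0 0 0 0
    simp only [Equiv.refl_apply, Equiv.swap_apply_left] at h
    exact h.symm
  have hn0 : (n:ℝ) ≠ 0 := Nat.cast_ne_zero.mpr (NeZero.ne n)
  have : (1:ℝ) = (n:ℝ) * ∫ H, E 0 0 H * E 0 0 H ∂μ := by
    rw [← hsum, hswap, Finset.sum_congr rfl fun j _ => hperm j, Finset.sum_const,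
      Finset.card_univ, Fintype.card_fin, nsmul_eq_mul]
  rw [eq_div_iff hn0]
  linarith [this]

/-- relation (2): q + (n-1) b = 1/n -/
lemma E2rel (hn : 2 ≤ n) :
    (∫ H, E 0 0 H * E 0 0 H * E 0 1 H * E 0 1 H ∂μ)
      + ((n:ℝ)-1) * (∫ H, E 0 0 H * E 0 0 H * E 1 1 H * E 1 1 H ∂μ) = 1 / (n:ℝ) := by
  have hcol : ∀ H : G n, ∑ i, E i 1 H * E i 1 H = 1 := by
    intro H
    simp only [E, ← pow_two]
    exact col_norm H 1
  have hpt : (fun H : G n => ∑ i, E 0 0 H * E 0 0 H * E i 1 H * E i 1 H)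
      = fun H : G n => E 0 0 H * E 0 0 H := by
    funext H
    have : ∑ i, E 0 0 H * E 0 0 H * E i 1 H * E i 1 H
        = (E 0 0 H * E 0 0 H) * ∑ i, E i 1 H * E i 1 H := by
      rw [Finset.mul_sum]
      exact Finset.sum_congr rfl fun i _ => by ring
    rw [this, hcol H, mul_one]
  have hswap : ∫ H, ∑ i, E 0 0 H * E 0 0 H * E i 1 H * E i 1 H ∂μ
      = ∑ i, ∫ H, E 0 0 H * E 0 0 H * E i 1 H * E i 1 H ∂μ :=
    integral_finset_sum _ (fun i _ => integrable_m4 μ 0 0 0 0 i 1 i 1)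
  have hval : ∀ i : Fin n, i ≠ 0 →
      ∫ H, E 0 0 H * E 0 0 H * E i 1 H * E i 1 H ∂μ
        = ∫ H, E 0 0 H * E 0 0 H * E 1 1 H * E 1 1 H ∂μ := by
    intro i hi
    obtain ⟨σ, hσ0, hσ1⟩ := exists_perm hn (Ne.symm hi)
    have h := m4_perm μ σ (Equiv.refl _) 0 0 0 0 1 1 1 1
    rw [hσ0, hσ1] at h
    simp only [Equiv.refl_apply] at h
    exact h.symm
  have hclass : ∀ i : Fin n,
      ∫ H, E 0 0 H * E 0 0 H * E i 1 H * E i 1 H ∂μ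
        = if i = 0 then ∫ H, E 0 0 H * E 0 0 H * E 0 1 H * E 0 1 H ∂μ
          else ∫ H, E 0 0 H * E 0 0 H * E 1 1 H * E 1 1 H ∂μ := by
    intro i
    by_cases hi : i = 0
    · subst hi; simp
    · rw [if_neg hi]
      exact hval i hi
  calc (∫ H, E 0 0 H * E 0 0 H * E 0 1 H * E 0 1 H ∂μ)
      + ((n:ℝ)-1) * (∫ H, E 0 0 H * E 0 0 H * E 1 1 H * E 1 1 H ∂μ)
      = ∑ i, ∫ H, E 0 0 H * E 0 0 H * E i 1 H * E i 1 H ∂μ := by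
        rw [Finset.sum_congr rfl fun i _ => hclass i, sum_if_eq]
    _ = ∫ H, ∑ i, E 0 0 H * E 0 0 H * E i 1 H * E i 1 H ∂μ := hswap.symm
    _ = ∫ H, E 0 0 H * E 0 0 H ∂μ := by rw [hpt]
    _ = 1 / (n:ℝ) := E0 μ hn

lemma integral_comb5 (f1 f2 f3 f4 f5 : G n → ℝ) (h1 : Continuous f1) (h2 : Continuous f2)
    (h3 : Continuous f3) (h4 : Continuous f4) (h5 : Continuous f5) (c1 c2 c3 c4 c5 : ℝ) :
    ∫ H, (c1 * f1 H + c2 * f2 H + c3 * f3 H + c4 * f4 H + c5 * f5 H) ∂μ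
      = c1 * ∫ H, f1 H ∂μ + c2 * ∫ H, f2 H ∂μ + c3 * ∫ H, f3 H ∂μ
        + c4 * ∫ H, f4 H ∂μ + c5 * ∫ H, f5 H ∂μ := by
  have I : ∀ (c : ℝ) (f : G n → ℝ), Continuous f → Integrable (fun H => c * f H) μ :=
    fun c f hf => (integrable_cont μ f hf).const_mul c
  have I1 : Integrable (fun H => c1 * f1 H) μ := I c1 f1 h1
  have I2 : Integrable (fun H => c2 * f2 H) μ := I c2 f2 h2
  have I3 : Integrable (fun H => c3 * f3 H) μ := I c3 f3 h3
  have I4 : Integrable (fun H => c4 * f4 H) μ := I c4 f4 h4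
  have I5 : Integrable (fun H => c5 * f5 H) μ := I c5 f5 h5
  have I12 : Integrable (fun H => c1 * f1 H + c2 * f2 H) μ := I1.add I2
  have I123 : Integrable (fun H => c1 * f1 H + c2 * f2 H + c3 * f3 H) μ := I12.add I3
  have I1234 : Integrable (fun H => c1 * f1 H + c2 * f2 H + c3 * f3 H + c4 * f4 H) μ :=
    I123.add I4
  rw [integral_add I1234 I5, integral_add I123 I4, integral_add I12 I3, integral_add I1 I2,
    integral_const_mul, integral_const_mul, integral_const_mul, integral_const_mul,
    integral_const_mul]

/-- rotation relation: p = 3 q -/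
lemma E3rel (hn : 2 ≤ n) :
    ∫ H, E 0 0 H * E 0 0 H * E 0 0 H * E 0 0 H ∂μ
      = 3 * ∫ H, E 0 0 H * E 0 0 H * E 0 1 H * E 0 1 H ∂μ := by
  have hrot : ∫ H, E 0 0 H * E 0 0 H * E 0 0 H * E 0 0 H ∂μ
      = ∫ H, (rc * (E 0 0 H - E 0 1 H))^4 ∂μ := by
    have step := (integral_mulR μ (rotG hn)
      (fun H => E 0 0 H * E 0 0 H * E 0 0 H * E 0 0 H)).symm
    rw [step]
    congr 1
    funext H
    have h0 : E 0 0 (H * rotG hn) = rc * (E 0 0 H - E 0 1 H) := by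
      show ((H * rotG hn : G n) : Matrix (Fin n) (Fin n) ℝ) 0 0 = _
      show ((H : Matrix (Fin n) (Fin n) ℝ) * Rm n) 0 0 = _
      rw [mul_Rm0 hn]
      rfl
    rw [h0]
    ring
  have h4 : rc^4 = (1/4 : ℝ) := by
    have h := rc_sq
    nlinarith [rc_sq]
  have hexp : (fun H : G n => (rc * (E 0 0 H - E 0 1 H))^4)
      = fun H : G n => (1/4) * (E 0 0 H * E 0 0 H * E 0 0 H * E 0 0 H)
        + (-1) * (E 0 0 H * E 0 0 H * E 0 0 H * E 0 1 H)
        + (3/2) * (E 0 0 H * E 0 0 H * E 0 1 H * E 0 1 H)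
        + (-1) * (E 0 0 H * E 0 1 H * E 0 1 H * E 0 1 H)
        + (1/4) * (E 0 1 H * E 0 1 H * E 0 1 H * E 0 1 H) := by
    funext H
    have : (rc * (E 0 0 H - E 0 1 H))^4 = rc^4 * (E 0 0 H - E 0 1 H)^4 := by ring
    rw [this, h4]
    ring
  have hcomb := integral_comb5 μ
    (fun H => E 0 0 H * E 0 0 H * E 0 0 H * E 0 0 H)
    (fun H => E 0 0 H * E 0 0 H * E 0 0 H * E 0 1 H)
    (fun H => E 0 0 H * E 0 0 H * E 0 1 H * E 0 1 H)
    (fun H => E 0 0 H * E 0 1 H * E 0 1 H * E 0 1 H)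
    (fun H => E 0 1 H * E 0 1 H * E 0 1 H * E 0 1 H)
    ((((continuous_E 0 0).mul (continuous_E 0 0)).mul (continuous_E 0 0)).mul (continuous_E 0 0))
    ((((continuous_E 0 0).mul (continuous_E 0 0)).mul (continuous_E 0 0)).mul (continuous_E 0 1))
    ((((continuous_E 0 0).mul (continuous_E 0 0)).mul (continuous_E 0 1)).mul (continuous_E 0 1))
    ((((continuous_E 0 0).mul (continuous_E 0 1)).mul (continuous_E 0 1)).mul (continuous_E 0 1))
    ((((continuous_E 0 1).mul (continuous_E 0 1)).mul (continuous_E 0 1)).mul (continuous_E 0 1))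
    (1/4) (-1) (3/2) (-1) (1/4)
  -- vanishing odd terms
  set s : Fin n → ℝ := fun a => if a = 1 then -1 else 1 with hs_def
  have hs : ∀ a, s a * s a = 1 := by
    intro a; by_cases h : a = 1 <;> simp [hs_def, h]
  have hsign1 : s 0 * s 0 * s 0 * s 1 = -1 := by
    simp [hs_def, fin01 hn]
  have hsign2 : s 0 * s 1 * s 1 * s 1 = -1 := by
    simp [hs_def, fin01 hn]
  have hz1 : ∫ H, E 0 0 H * E 0 0 H * E 0 0 H * E 0 1 H ∂μ = 0 :=
    m4_zeroR μ s hs 0 0 0 0 0 0 0 1 hsign1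
  have hz2 : ∫ H, E 0 0 H * E 0 1 H * E 0 1 H * E 0 1 H ∂μ = 0 :=
    m4_zeroR μ s hs 0 0 0 1 0 1 0 1 hsign2
  -- ∫ E01^4 = ∫ E00^4
  have hp5 : ∫ H, E 0 1 H * E 0 1 H * E 0 1 H * E 0 1 H ∂μ
      = ∫ H, E 0 0 H * E 0 0 H * E 0 0 H * E 0 0 H ∂μ := by
    have h := m4_perm μ (Equiv.refl _) (Equiv.swap 0 1) 0 0 0 0 0 0 0 0
    simp only [Equiv.refl_apply, Equiv.swap_apply_left] at h
    exact h.symm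
  have key := hrot
  rw [hexp, hcomb, hz1, hz2, hp5] at key
  linarith [key]

end Relations


section Classification

variable [NeZero n] [MeasurableSpace (G n)] [BorelSpace (G n)]
variable (μ : Measure (G n)) [μ.IsHaarMeasure] [IsProbabilityMeasure μ]

/-- the full classification of the needed fourth moments -/
lemma Mval (hn : 2 ≤ n) (i j k l : Fin n) :
    ∫ H, (E i j H * E j i H) * (E k l H * E l k H) ∂μ =
      if i = j then
        (if k = l then
          (if k = i then ∫ H, E 0 0 H * E 0 0 H * E 0 0 H * E 0 0 H ∂μ
            else ∫ H, E 0 0 H * E 0 0 H * E 1 1 H * E 1 1 H ∂μ)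
          else 0)
      else if (k = i ∧ l = j) ∨ (k = j ∧ l = i) then
        ∫ H, E 0 0 H * E 0 0 H * E 1 1 H * E 1 1 H ∂μ
      else 0 := by
  have hassoc : (fun H : G n => (E i j H * E j i H) * (E k l H * E l k H))
      = fun H : G n => E i j H * E j i H * E k l H * E l k H := by
    funext H; ring
  rw [hassoc]
  by_cases hij : i = j
  · subst hij
    rw [if_pos rfl]
    by_cases hkl : k = l
    · subst hkl
      rw [if_pos rfl]
      by_cases hki : k = i
      · subst hki
        rw [if_pos rfl]
        have h := m4_perm μ (Equiv.swap 0 k) (Equiv.swap 0 k) 0 0 0 0 0 0 0 0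
        simp only [Equiv.swap_apply_left] at h
        exact h.symm
      · rw [if_neg hki]
        obtain ⟨σ, hσ0, hσ1⟩ := exists_perm hn (Ne.symm hki)
        have h := m4_perm μ σ σ 0 0 0 0 1 1 1 1
        rw [hσ0, hσ1] at h
        exact h.symm
    · rw [if_neg hkl]
      -- zero case: rows (i,i,k,l) with k ≠ l
      by_cases hki : k = i
      · -- r = l
        have hil : i ≠ l := hki ▸ hkl
        refine m4_zeroL μ (fun a => if a = l then -1 else 1)
          (fun a => by by_cases h : a = l <;> simp [h]) i i i i k l l k ?_
        simp [hil, hkl]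
      · -- r = k
        have hik : i ≠ k := fun h => hki h.symm
        have hlk : l ≠ k := fun h => hkl h.symm
        refine m4_zeroL μ (fun a => if a = k then -1 else 1)
          (fun a => by by_cases h : a = k <;> simp [h]) i i i i k l l k ?_
        simp [hik, hlk]
  · rw [if_neg hij]
    by_cases hmatch : (k = i ∧ l = j) ∨ (k = j ∧ l = i)
    · rw [if_pos hmatch]
      have hb : ∫ H, E 0 0 H * E 0 0 H * E 1 1 H * E 1 1 H ∂μ
          = ∫ H, E i j H * E i j H * E j i H * E j i H ∂μ := by
        obtain ⟨σ, hσ0, hσ1⟩ := exists_perm hn hij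
        obtain ⟨τ, hτ0, hτ1⟩ := exists_perm hn (Ne.symm hij)
        have h := m4_perm μ σ τ 0 0 0 0 1 1 1 1
        rw [hσ0, hσ1, hτ0, hτ1] at h
        exact h
      rcases hmatch with ⟨hk, hl⟩ | ⟨hk, hl⟩
      · subst hk; subst hl
        rw [hb]
        congr 1
        funext H
        ring
      · subst hk; subst hl
        rw [hb]
        congr 1
        funext H
        ring
    · rw [if_neg hmatch]
      push_neg at hmatch
      -- rows (i,j,k,l); choose r of odd multiplicity
      by_cases hcase : i = k ∨ i = l
      · -- r = j
        have hkj : k ≠ j := by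
          rcases hcase with hik | hil
          · rw [← hik]; exact hij
          · intro h; exact (hmatch.2 h) hil.symm
        have hlj : l ≠ j := by
          rcases hcase with hik | hil
          · exact hmatch.1 hik.symm
          · rw [← hil]; exact hij
        refine m4_zeroL μ (fun a => if a = j then -1 else 1)
          (fun a => by by_cases h : a = j <;> simp [h]) i j j i k l l k ?_
        simp [hij, hkj, hlj]
      · -- r = i
        push_neg at hcase
        have hji : j ≠ i := Ne.symm hij
        have hki' : k ≠ i := fun h => hcase.1 h.symm
        have hli : l ≠ i := fun h => hcase.2 h.symm
        refine m4_zeroL μ (fun a => if a = i then -1 else 1)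
          (fun a => by by_cases h : a = i <;> simp [h]) i j j i k l l k ?_
        simp [hji, hki', hli]

end Classification


section FinalSum

variable [NeZero n]

lemma sum_v (p b : ℝ) :
    (∑ z : Fin n × Fin n, ∑ w : Fin n × Fin n,
      (if z.1 = z.2 then
        (if w.1 = w.2 then (if w.1 = z.1 then p else b) else 0)
      else if (w.1 = z.1 ∧ w.2 = z.2) ∨ (w.1 = z.2 ∧ w.2 = z.1) then b else 0))
      = (n:ℝ) * p + 3 * (n:ℝ) * ((n:ℝ) - 1) * b := by
  have inner_eq : ∀ z : Fin n × Fin n,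
      (∑ w : Fin n × Fin n,
        (if z.1 = z.2 then
          (if w.1 = w.2 then (if w.1 = z.1 then p else b) else 0)
        else if (w.1 = z.1 ∧ w.2 = z.2) ∨ (w.1 = z.2 ∧ w.2 = z.1) then b else 0))
        = if z.1 = z.2 then (p + ((n:ℝ)-1)*b) else 2*b := by
    intro z
    by_cases hz : z.1 = z.2
    · rw [if_pos hz, Finset.sum_congr rfl fun w _ => if_pos hz, Fintype.sum_prod_type]
      have hinner : ∀ k : Fin n, (∑ l : Fin n,
          (if (k, l).1 = (k, l).2 then (if (k, l).1 = z.1 then p else b) else 0))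
          = if k = z.1 then p else b := by
        intro k
        simp only
        rw [Finset.sum_ite_eq Finset.univ k fun _ => if k = z.1 then p else b]
        simp
      rw [Finset.sum_congr rfl fun k _ => hinner k, sum_if_eq]
    · rw [if_neg hz, Finset.sum_congr rfl fun w _ => if_neg hz]
      have hsplit : ∀ w : Fin n × Fin n,
          (if (w.1 = z.1 ∧ w.2 = z.2) ∨ (w.1 = z.2 ∧ w.2 = z.1) then b else 0)
            = (if w.1 = z.1 ∧ w.2 = z.2 then b else 0)
              + (if w.1 = z.2 ∧ w.2 = z.1 then b else 0) := by
        intro w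
        by_cases h1 : w.1 = z.1 ∧ w.2 = z.2
        · have h2 : ¬(w.1 = z.2 ∧ w.2 = z.1) := by
            intro h2
            exact hz (h1.1.symm.trans h2.1)
          rw [if_pos (Or.inl h1), if_pos h1, if_neg h2]
          ring
        · by_cases h2 : w.1 = z.2 ∧ w.2 = z.1
          · rw [if_pos (Or.inr h2), if_neg h1, if_pos h2]
            ring
          · rw [if_neg (by rintro (h | h); exacts [h1 h, h2 h]), if_neg h1, if_neg h2]
            ring
      rw [Finset.sum_congr rfl fun w _ => hsplit w, Finset.sum_add_distrib]
      have e1 : (∑ w : Fin n × Fin n, if w.1 = z.1 ∧ w.2 = z.2 then b else 0) = b := by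
        rw [Fintype.sum_prod_type]
        exact sum_pair_ind z.1 z.2 b
      have e2 : (∑ w : Fin n × Fin n, if w.1 = z.2 ∧ w.2 = z.1 then b else 0) = b := by
        rw [Fintype.sum_prod_type]
        exact sum_pair_ind z.2 z.1 b
      rw [e1, e2]
      ring
  rw [Finset.sum_congr rfl fun z _ => inner_eq z, Fintype.sum_prod_type]
  have houter : ∀ i : Fin n, (∑ j : Fin n,
      (if ((i, j) : Fin n × Fin n).1 = (i, j).2 then (p + ((n:ℝ)-1)*b) else 2*b))
      = (p + ((n:ℝ)-1)*b) + ((n:ℝ)-1) * (2*b) := by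
    intro i
    have : ∀ j : Fin n, (if ((i, j) : Fin n × Fin n).1 = (i, j).2 then (p + ((n:ℝ)-1)*b) else 2*b)
        = if j = i then (p + ((n:ℝ)-1)*b) else 2*b := by
      intro j
      by_cases h : i = j
      · simp [h]
      · have h' : ¬(j = i) := fun hh => h hh.symm
        simp [h, h']
    rw [Finset.sum_congr rfl fun j _ => this j, sum_if_eq]
  rw [Finset.sum_congr rfl fun i _ => houter i, Finset.sum_const, Finset.card_univ,
    Fintype.card_fin, nsmul_eq_mul]
  ring

end FinalSum

end HaarO

open HaarO in
/-- For `H` Haar-distributed on `O(n)`, `n ≥ 2`: `E(tr(H²)²) = 3`. -/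
theorem haar_expect_sq_trace_sq {n : ℕ} (hn : 2 ≤ n)
    [MeasurableSpace (Matrix.orthogonalGroup (Fin n) ℝ)]
    [BorelSpace (Matrix.orthogonalGroup (Fin n) ℝ)]
    (μ : Measure (Matrix.orthogonalGroup (Fin n) ℝ))
    [μ.IsHaarMeasure] [IsProbabilityMeasure μ] :
    ∫ H, (Matrix.trace (((H : Matrix (Fin n) (Fin n) ℝ)) ^ 2)) ^ 2 ∂μ = 3 := by
  haveI : NeZero n := ⟨by omega⟩
  have hfun : (fun H : G n => (Matrix.trace (((H : Matrix (Fin n) (Fin n) ℝ)) ^ 2)) ^ 2)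
      = fun H : G n => ∑ z : Fin n × Fin n, ∑ w : Fin n × Fin n,
          (E z.1 z.2 H * E z.2 z.1 H) * (E w.1 w.2 H * E w.2 w.1 H) := by
    funext H
    have htr : Matrix.trace ((H : Matrix (Fin n) (Fin n) ℝ) ^ 2)
        = ∑ z : Fin n × Fin n, E z.1 z.2 H * E z.2 z.1 H := by
      rw [Fintype.sum_prod_type, pow_two]
      simp only [Matrix.trace, Matrix.diag, Matrix.mul_apply, E]
    rw [htr, pow_two, Finset.sum_mul_sum]
  rw [hfun]
  have hcont : ∀ z w : Fin n × Fin n, Continuous (fun H : G n =>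
      (E z.1 z.2 H * E z.2 z.1 H) * (E w.1 w.2 H * E w.2 w.1 H)) := fun z w =>
    ((continuous_E z.1 z.2).mul (continuous_E z.2 z.1)).mul
      ((continuous_E w.1 w.2).mul (continuous_E w.2 w.1))
  rw [integral_finset_sum _ (fun z _ => integrable_cont μ _
    (continuous_finset_sum _ fun w _ => hcont z w))]
  have hswap : ∀ z : Fin n × Fin n,
      (∫ H, ∑ w : Fin n × Fin n, (E z.1 z.2 H * E z.2 z.1 H) * (E w.1 w.2 H * E w.2 w.1 H) ∂μ)
        = ∑ w : Fin n × Fin n,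
          ∫ H, (E z.1 z.2 H * E z.2 z.1 H) * (E w.1 w.2 H * E w.2 w.1 H) ∂μ := fun z =>
    integral_finset_sum _ (fun w _ => integrable_cont μ _ (hcont z w))
  rw [Finset.sum_congr rfl fun z _ => hswap z]
  have hM : ∀ z w : Fin n × Fin n,
      (∫ H, (E z.1 z.2 H * E z.2 z.1 H) * (E w.1 w.2 H * E w.2 w.1 H) ∂μ)
        = if z.1 = z.2 then
            (if w.1 = w.2 then (if w.1 = z.1 then
              ∫ H, E 0 0 H * E 0 0 H * E 0 0 H * E 0 0 H ∂μ
              else ∫ H, E 0 0 H * E 0 0 H * E 1 1 H * E 1 1 H ∂μ) else 0)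
          else if (w.1 = z.1 ∧ w.2 = z.2) ∨ (w.1 = z.2 ∧ w.2 = z.1) then
            ∫ H, E 0 0 H * E 0 0 H * E 1 1 H * E 1 1 H ∂μ
          else 0 := fun z w => Mval μ hn z.1 z.2 w.1 w.2
  rw [Finset.sum_congr rfl fun z _ => Finset.sum_congr rfl fun w _ => hM z w, sum_v]
  -- final algebra
  set p := ∫ H, E 0 0 H * E 0 0 H * E 0 0 H * E 0 0 H ∂μ with hp_def
  set q := ∫ H, E 0 0 H * E 0 0 H * E 0 1 H * E 0 1 H ∂μ with hq_def
  set b := ∫ H, E 0 0 H * E 0 0 H * E 1 1 H * E 1 1 H ∂μ with hb_def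
  have hpq : p = 3 * q := E3rel μ hn
  have hqb : q + ((n:ℝ)-1) * b = 1 / (n:ℝ) := E2rel μ hn
  have hn0 : (n:ℝ) ≠ 0 := Nat.cast_ne_zero.mpr (NeZero.ne n)
  have h1 : ((n:ℝ)-1) * b = 1/(n:ℝ) - q := by linarith
  calc (n:ℝ) * p + 3 * (n:ℝ) * ((n:ℝ) - 1) * b
      = 3 * (n:ℝ) * q + 3 * (n:ℝ) * (((n:ℝ)-1) * b) := by rw [hpq]; ring
    _ = 3 * (n:ℝ) * q + 3 * (n:ℝ) * (1/(n:ℝ) - q) := by rw [h1]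
    _ = 3 := by field_simp; ring
end
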